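/- The square root of θ, i.e. the function t ↦ √(θ(t)) with θ(t) = t² on [0,1] and θ(t) = 2t - 1 on [1,∞), is subadditive on [0,∞); consequently, for any metric d on X, the function d̃(x,y) = √(θ(a·d(x,y))) defines a metric on X for every a > 0. -/
import Mathlib


/-- Talagrand's cost function: `θ t = t²` for `t ≤ 1` and `θ t = 2t - 1` for `t ≥ 1`. -/
noncomputable def theta (t : ℝ) : ℝ := if t ≤ 1 then t ^ 2 else 2 * t - 1

lemma theta_nonneg {t : ℝ} (ht : 0 ≤ t) : 0 ≤ theta t := by
  unfold theta; split <;> nlinarith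

lemma theta_mono {u v : ℝ} (hu : 0 ≤ u) (huv : u ≤ v) : theta u ≤ theta v := by
  unfold theta; split <;> split <;> nlinarith

lemma sqrt_le_add {A B C : ℝ} (hA : 0 ≤ A) (hB : 0 ≤ B)
    (h : C ≤ A + B + 2 * Real.sqrt (A * B)) :
    Real.sqrt C ≤ Real.sqrt A + Real.sqrt B := by
  have h2 : C ≤ (Real.sqrt A + Real.sqrt B) ^ 2 := by
    rw [add_sq, Real.sq_sqrt hA, Real.sq_sqrt hB]
    rw [Real.sqrt_mul hA] at h
    linarith
  calc Real.sqrt C ≤ Real.sqrt ((Real.sqrt A + Real.sqrt B) ^ 2) := Real.sqrt_le_sqrt h2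
    _ = Real.sqrt A + Real.sqrt B := Real.sqrt_sq (by positivity)

lemma sqrt_theta_subadd (s t : ℝ) (hs : 0 ≤ s) (ht : 0 ≤ t) :
    Real.sqrt (theta (s + t)) ≤ Real.sqrt (theta s) + Real.sqrt (theta t) := by
  apply sqrt_le_add (theta_nonneg hs) (theta_nonneg ht)
  unfold theta
  by_cases hs1 : s ≤ 1 <;> by_cases ht1 : t ≤ 1 <;>
    simp only [hs1, ht1, if_pos, if_neg, if_true, if_false]
  · -- both ≤ 1
    have hst : Real.sqrt (s ^ 2 * t ^ 2) = s * t := by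
      rw [← mul_pow, Real.sqrt_sq (by positivity)]
    rw [hst]
    split
    · nlinarith
    · nlinarith
  · -- s ≤ 1 < t
    have h1 : (1:ℝ) ≤ Real.sqrt (2 * t - 1) := by
      have : Real.sqrt 1 ≤ Real.sqrt (2 * t - 1) := Real.sqrt_le_sqrt (by linarith)
      simpa using this
    have hst : Real.sqrt (s ^ 2 * (2 * t - 1)) = s * Real.sqrt (2 * t - 1) := by
      rw [Real.sqrt_mul (by positivity), Real.sqrt_sq hs]
    rw [hst]
    split
    · nlinarith
    · nlinarith
  · -- t ≤ 1 < s
    have h1 : (1:ℝ) ≤ Real.sqrt (2 * s - 1) := by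
      have : Real.sqrt 1 ≤ Real.sqrt (2 * s - 1) := Real.sqrt_le_sqrt (by linarith)
      simpa using this
    have hst : Real.sqrt ((2 * s - 1) * t ^ 2) = Real.sqrt (2 * s - 1) * t := by
      rw [mul_comm, Real.sqrt_mul (by positivity), Real.sqrt_sq ht, mul_comm]
    rw [hst]
    split
    · nlinarith
    · nlinarith
  · -- both > 1
    have h1 : (1:ℝ) ≤ Real.sqrt ((2 * s - 1) * (2 * t - 1)) := by
      have : Real.sqrt 1 ≤ Real.sqrt ((2 * s - 1) * (2 * t - 1)) :=
        Real.sqrt_le_sqrt (by nlinarith)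
      simpa using this
    split
    · nlinarith
    · nlinarith

/-- `t ↦ √(θ t)` is subadditive on `[0,∞)`; consequently, for any metric
space `(X,d)` and any `a > 0`, `d̃(x,y) = √(θ(a d(x,y)))` defines a metric on `X`
(point separation, symmetry and the triangle inequality). -/
theorem sqrt_theta_subadditive_metric {X : Type*} [MetricSpace X] (a : ℝ) (ha : 0 < a) :
    (∀ s t : ℝ, 0 ≤ s → 0 ≤ t →
        Real.sqrt (theta (s + t)) ≤ Real.sqrt (theta s) + Real.sqrt (theta t)) ∧
    (∀ x y : X, Real.sqrt (theta (a * dist x y)) = 0 ↔ x = y) ∧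
    (∀ x y : X, Real.sqrt (theta (a * dist x y)) = Real.sqrt (theta (a * dist y x))) ∧
    (∀ x y z : X, Real.sqrt (theta (a * dist x z)) ≤
        Real.sqrt (theta (a * dist x y)) + Real.sqrt (theta (a * dist y z))) := by
  refine ⟨sqrt_theta_subadd, ?_, ?_, ?_⟩
  · intro x y
    rw [Real.sqrt_eq_zero' ]
    constructor
    · intro h
      have hd : 0 ≤ dist x y := dist_nonneg
      have : theta (a * dist x y) = 0 := le_antisymm h (theta_nonneg (by positivity))
      unfold theta at this
      by_contra hxy
      have hd' : 0 < dist x y := dist_pos.mpr hxy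
      split at this
      · nlinarith [mul_pos (mul_pos ha hd') (mul_pos ha hd')]
      · nlinarith
    · intro h
      subst h
      simp [theta]
  · intro x y; rw [dist_comm]
  · intro x y z
    have h1 : Real.sqrt (theta (a * dist x z)) ≤
        Real.sqrt (theta (a * dist x y + a * dist y z)) := by
      apply Real.sqrt_le_sqrt
      apply theta_mono (by positivity)
      have := dist_triangle x y z
      nlinarith
    exact h1.trans (sqrt_theta_subadd _ _ (by positivity) (by positivity))
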